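/- arXiv:2012.12772 — 2 statements merged into one kernel-verified Lean document; each statement's English description precedes it below -/
import Mathlib

section
/- For any X ∈ S^n, writing HXH in block form as [[X̃_{11}, x̃],[x̃^T, x̃_0]] with X̃_{11} ∈ S^{n-1}, we have JXJ = H · [[X̃_{11}, 0],[0,0]] · H, where H is the Householder matrix with u = (1,...,1,√n+1)^T and J the centering matrix. -/
open Matrix

/-- The centering matrix `J = I - (1/n) 𝟙𝟙ᵀ` (of size `n+1`). -/
noncomputable def centerJ (n : ℕ) : Matrix (Fin (n + 1)) (Fin (n + 1)) ℝ :=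
  1 - ((n + 1 : ℝ))⁻¹ • Matrix.of (fun _ _ => (1 : ℝ))

/-- The vector `u = (1,…,1,√(n+1)+1)ᵀ`. -/
noncomputable def uvec (n : ℕ) : Fin (n + 1) → ℝ :=
  fun i => if i = Fin.last n then Real.sqrt (n + 1) + 1 else 1

/-- The Householder matrix `H = I - (2/(uᵀu)) u uᵀ`. -/
noncomputable def householderH (n : ℕ) : Matrix (Fin (n + 1)) (Fin (n + 1)) ℝ :=
  1 - (2 / (uvec n ⬝ᵥ uvec n)) • Matrix.vecMulVec (uvec n) (uvec n)

lemma sqrt_mul_self' (n : ℕ) : Real.sqrt (n+1) * Real.sqrt (n+1) = (n+1 : ℝ) :=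
  Real.mul_self_sqrt (by positivity)

lemma sqrt_pos' (n : ℕ) : (0:ℝ) < Real.sqrt (n+1) :=
  Real.sqrt_pos.mpr (by positivity)

lemma uvec_dot (n : ℕ) : uvec n ⬝ᵥ uvec n = 2*(n+1) + 2*Real.sqrt (n+1) := by
  have hs := sqrt_mul_self' n
  simp only [dotProduct, uvec]
  rw [Fin.sum_univ_castSucc]
  have h1 : ∀ i : Fin n, ((if (i.castSucc = Fin.last n) then Real.sqrt (n+1) + 1 else 1) *
      (if (i.castSucc = Fin.last n) then Real.sqrt (n+1) + 1 else 1) : ℝ) = 1 := by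
    intro i
    rw [if_neg (Fin.ne_last_of_lt (Fin.castSucc_lt_last i))]
    ring
  rw [Finset.sum_congr rfl (fun i _ => h1 i)]
  simp
  nlinarith [hs]

lemma uvec_dot_pos (n : ℕ) : 0 < uvec n ⬝ᵥ uvec n := by
  rw [uvec_dot]; have := sqrt_pos' n; positivity

lemma H_apply_last (n : ℕ) (i : Fin (n+1)) :
    householderH n i (Fin.last n) = -(Real.sqrt (n+1))⁻¹ := by
  have hs := sqrt_mul_self' n
  have hsp := sqrt_pos' n
  set s := Real.sqrt (n+1) with hsdef
  simp only [householderH, Matrix.sub_apply, Matrix.smul_apply, vecMulVec_apply, one_apply, uvec_dot,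
    smul_eq_mul, uvec, if_pos rfl, if_true, ← hsdef]
  by_cases h : i = Fin.last n
  · rw [if_pos h, if_pos h]
    field_simp
    nlinarith [hs]
  · rw [if_neg h, if_neg h]
    field_simp
    nlinarith [hs]

lemma H_symm_entry (n : ℕ) (i j : Fin (n+1)) :
    householderH n i j = householderH n j i := by
  simp only [householderH, Matrix.sub_apply, Matrix.smul_apply, vecMulVec_apply, one_apply, smul_eq_mul]
  by_cases h : i = j
  · subst h; ring
  · rw [if_neg h, if_neg (Ne.symm h)]; ring

lemma H_last_apply (n : ℕ) (j : Fin (n+1)) :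
    householderH n (Fin.last n) j = -(Real.sqrt (n+1))⁻¹ := by
  rw [H_symm_entry]; exact H_apply_last n j

lemma vecMulVec_mul_vecMulVec (n : ℕ) (u : Fin (n+1) → ℝ) :
    Matrix.vecMulVec u u * Matrix.vecMulVec u u = (u ⬝ᵥ u) • Matrix.vecMulVec u u := by
  ext i j
  simp only [mul_apply, vecMulVec_apply, Matrix.smul_apply, smul_eq_mul, dotProduct,
    Finset.sum_mul]
  apply Finset.sum_congr rfl
  intro k _
  ring

lemma H_mul_H (n : ℕ) : householderH n * householderH n = 1 := by
  have hd := uvec_dot_pos n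
  set d := uvec n ⬝ᵥ uvec n with hddef
  simp only [householderH, ← hddef, sub_mul, mul_sub, one_mul, mul_one,
    Matrix.smul_mul, Matrix.mul_smul, vecMulVec_mul_vecMulVec, ← hddef, smul_smul]
  have : 2 / d * (2 / d * d) = 2/d + 2/d := by field_simp; ring
  rw [this, add_smul]
  abel

noncomputable def Emat (n : ℕ) : Matrix (Fin (n+1)) (Fin (n+1)) ℝ :=
  Matrix.of (fun i j => if i = Fin.last n ∧ j = Fin.last n then (1:ℝ) else 0)

lemma H_E_H (n : ℕ) :
    householderH n * Emat n * householderH n = ((n+1:ℝ))⁻¹ • Matrix.of (fun _ _ => (1:ℝ)) := by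
  have hs := sqrt_mul_self' n
  have hsp := sqrt_pos' n
  ext i j
  rw [mul_apply]
  have h1 : ∀ k, (householderH n * Emat n) i k * householderH n k j =
      if k = Fin.last n then householderH n i (Fin.last n) * householderH n (Fin.last n) j
      else 0 := by
    intro k
    rw [mul_apply]
    by_cases hk : k = Fin.last n
    · subst hk
      rw [if_pos rfl]
      have : ∀ l, householderH n i l * Emat n l (Fin.last n) =
          if l = Fin.last n then householderH n i (Fin.last n) else 0 := by
        intro l
        simp only [Emat, Matrix.of_apply]
        by_cases hl : l = Fin.last n
        · subst hl; simp
        · simp [hl]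
      rw [Finset.sum_congr rfl (fun l _ => this l), Finset.sum_ite_eq' Finset.univ]
      simp
    · rw [if_neg hk]
      have : ∀ l, householderH n i l * Emat n l k = 0 := by
        intro l; simp [Emat, hk]
      rw [Finset.sum_congr rfl (fun l _ => this l)]
      simp
  rw [Finset.sum_congr rfl (fun k _ => h1 k), Finset.sum_ite_eq' Finset.univ]
  simp only [Finset.mem_univ, if_true, H_apply_last, H_last_apply, Matrix.smul_apply,
    Matrix.of_apply, smul_eq_mul, mul_one]
  rw [neg_mul_neg, ← mul_inv]
  rw [hs]

lemma H_P_H (n : ℕ) :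
    householderH n * (1 - Emat n) * householderH n = centerJ n := by
  rw [mul_sub, mul_one, sub_mul, H_mul_H, centerJ, H_E_H]

lemma block_eq (n : ℕ) (Y : Matrix (Fin (n+1)) (Fin (n+1)) ℝ) :
    Matrix.of (fun i j : Fin (n + 1) =>
        if i ≠ Fin.last n ∧ j ≠ Fin.last n then Y i j else 0) =
      (1 - Emat n) * Y * (1 - Emat n) := by
  ext i j
  rw [mul_apply]
  have h1 : ∀ k, ((1 - Emat n) * Y) i k * (1 - Emat n) k j =
      (if i = Fin.last n then 0 else Y i k) * (if k = Fin.last n ∧ j = Fin.last n then 0 else (1 : Matrix (Fin (n+1)) (Fin (n+1)) ℝ) k j) := by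
    intro k
    congr 1
    · rw [mul_apply]
      have : ∀ l, (1 - Emat n) i l * Y l k =
          (if l = i then Y i k else 0) - (if i = Fin.last n ∧ l = Fin.last n then Y (Fin.last n) k else 0) := by
        intro l
        simp only [Matrix.sub_apply, one_apply, Emat, Matrix.of_apply, sub_mul]
        congr 1
        · by_cases h : i = l
          · subst h; simp
          · rw [if_neg h, if_neg (Ne.symm h)]; ring
        · by_cases h : i = Fin.last n ∧ l = Fin.last n
          · rw [if_pos h, if_pos h, h.2, one_mul]
          · rw [if_neg h, if_neg h, zero_mul]
      rw [Finset.sum_congr rfl (fun l _ => this l), Finset.sum_sub_distrib,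
        Finset.sum_ite_eq' Finset.univ]
      by_cases h : i = Fin.last n
      · subst h
        simp
      · simp [h]
    · simp only [Matrix.sub_apply, Emat, Matrix.of_apply]
      by_cases h : k = Fin.last n ∧ j = Fin.last n
      · rw [if_pos h, if_pos h, h.1, h.2]; simp
      · rw [if_neg h, if_neg h, sub_zero]
  rw [Finset.sum_congr rfl (fun k _ => h1 k)]
  by_cases hi : i = Fin.last n
  · simp [hi]
  · simp only [if_neg hi]
    by_cases hj : j = Fin.last n
    · subst hj
      have : ∀ k ∈ Finset.univ, Y i k * (if k = Fin.last n ∧ (Fin.last n : Fin (n+1)) = Fin.last n then 0 else (1 : Matrix (Fin (n+1)) (Fin (n+1)) ℝ) k (Fin.last n)) = 0 := by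
        intro k _
        by_cases hk : k = Fin.last n
        · simp [hk]
        · simp [hk, one_apply, hk]
      rw [Finset.sum_congr rfl this]
      simp [hi]
    · have : ∀ k, Y i k * (if k = Fin.last n ∧ j = Fin.last n then 0 else (1 : Matrix (Fin (n+1)) (Fin (n+1)) ℝ) k j) = if k = j then Y i j else 0 := by
        intro k
        rw [if_neg (by tauto)]
        simp only [one_apply]
        by_cases h : k = j
        · subst h; simp
        · simp [h]
      rw [Finset.sum_congr rfl (fun k _ => this k), Finset.sum_ite_eq' Finset.univ]
      simp [hi, hj]

/-- Writing `HXH` in block form `[[X̃₁₁, x̃],[x̃ᵀ, x̃₀]]`, one has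
`JXJ = H · [[X̃₁₁, 0],[0,0]] · H`. -/
theorem centerJ_conj_eq_block (n : ℕ)
    (X : Matrix (Fin (n + 1)) (Fin (n + 1)) ℝ) (hX : X.IsSymm) :
    centerJ n * X * centerJ n =
      householderH n *
        Matrix.of (fun i j : Fin (n + 1) =>
          if i ≠ Fin.last n ∧ j ≠ Fin.last n then
            (householderH n * X * householderH n) i j else 0) *
        householderH n := by
  rw [block_eq, ← H_P_H]
  simp only [← mul_assoc]
end

section
/- For an integer 1 ≤ r ≤ n and X ∈ S^n, one has X ∈ K^n_+ with rank(JXJ) ≤ r if and only if the leading (n-1)×(n-1) block X̃_{11} of HXH is positive semidefinite with rank(X̃_{11}) ≤ r, where H is the Householder matrix with u = (1,...,1,√n+1)^T. -/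
open Matrix

namespace APSD
variable (n : ℕ)

/-- The embedding matrix `E` with `E i j = δ_{i, castSucc j}`. -/
noncomputable def Emat : Matrix (Fin (n+1)) (Fin n) ℝ :=
  Matrix.of fun i j => if i = Fin.castSucc j then 1 else 0

lemma Emat_tmul {m : Type*} [Fintype m] (A : Matrix (Fin (n+1)) m ℝ) :
    (Emat n)ᵀ * A = A.submatrix Fin.castSucc id := by
  ext j i
  simp only [Matrix.mul_apply, Matrix.transpose_apply, Emat, Matrix.of_apply,
    Matrix.submatrix_apply, id_eq, ite_mul, one_mul, zero_mul]
  rw [Finset.sum_eq_single (Fin.castSucc j)] <;> simp_all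

lemma Emat_mul {m : Type*} [Fintype m] (A : Matrix m (Fin (n+1)) ℝ) :
    A * Emat n = A.submatrix id Fin.castSucc := by
  ext i j
  simp only [Matrix.mul_apply, Emat, Matrix.of_apply,
    Matrix.submatrix_apply, id_eq, mul_ite, mul_one, mul_zero]
  rw [Finset.sum_eq_single (Fin.castSucc j)] <;> simp_all

lemma EtE : (Emat n)ᵀ * Emat n = 1 := by
  rw [Emat_tmul]
  ext i j
  simp [Emat, Matrix.one_apply, Fin.castSucc_inj]

lemma EtAE (A : Matrix (Fin (n+1)) (Fin (n+1)) ℝ) :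
    (Emat n)ᵀ * A * Emat n = A.submatrix Fin.castSucc Fin.castSucc := by
  rw [Emat_tmul, Emat_mul, Matrix.submatrix_submatrix]
  rfl

lemma udot : uvec n ⬝ᵥ uvec n = 2*((n:ℝ)+1) + 2*Real.sqrt ((n:ℝ)+1) := by
  have hs : Real.sqrt ((n:ℝ)+1) * Real.sqrt ((n:ℝ)+1) = (n:ℝ)+1 :=
    Real.mul_self_sqrt (by positivity)
  have h1 : ∀ i : Fin n, (Fin.castSucc i = Fin.last n) = False :=
    fun i => eq_false (Fin.castSucc_lt_last i).ne
  simp only [dotProduct, uvec, Fin.sum_univ_castSucc, h1, if_false, if_pos rfl, mul_one,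
    Finset.sum_const, Finset.card_univ, Fintype.card_fin, nsmul_eq_mul]
  push_cast
  nlinarith [hs]

lemma usum : uvec n ⬝ᵥ (fun _ => (1:ℝ)) = (n:ℝ) + 1 + Real.sqrt ((n:ℝ)+1) := by
  have h1 : ∀ i : Fin n, (Fin.castSucc i = Fin.last n) = False :=
    fun i => eq_false (Fin.castSucc_lt_last i).ne
  simp only [dotProduct, uvec, Fin.sum_univ_castSucc, h1, if_false, if_pos rfl, mul_one,
    Finset.sum_const, Finset.card_univ, Fintype.card_fin, nsmul_eq_mul]
  push_cast
  ring

lemma vv_mul_vv {m k l : Type*} [Fintype k] (a : m → ℝ) (b c : k → ℝ) (d : l → ℝ) :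
    vecMulVec a b * vecMulVec c d = (b ⬝ᵥ c) • vecMulVec a d := by
  ext i j
  simp only [Matrix.mul_apply, vecMulVec_apply, Matrix.smul_apply, dotProduct,
    Finset.sum_mul, smul_eq_mul]
  exact Finset.sum_congr rfl fun k _ => by ring

lemma vv_sub {m k : Type*} (a b : m → ℝ) (c : k → ℝ) :
    vecMulVec (a - b) c = vecMulVec a c - vecMulVec b c := by
  ext i j; simp [vecMulVec_apply, sub_mul]

lemma vv_sub' {m k : Type*} (a : m → ℝ) (b c : k → ℝ) :
    vecMulVec a (b - c) = vecMulVec a b - vecMulVec a c := by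
  ext i j; simp [vecMulVec_apply, mul_sub]

lemma vv_transpose {m k : Type*} (a : m → ℝ) (b : k → ℝ) :
    (vecMulVec a b)ᵀ = vecMulVec b a := by
  ext i j; simp [vecMulVec_apply, mul_comm]

lemma udot_pos : 0 < uvec n ⬝ᵥ uvec n := by
  rw [udot]; positivity

lemma H_symm : (householderH n)ᵀ = householderH n := by
  simp [householderH, transpose_sub, transpose_smul, vv_transpose]

lemma H_mul_H : householderH n * householderH n = 1 := by
  have hs : uvec n ⬝ᵥ uvec n ≠ 0 := (udot_pos n).ne'
  set c : ℝ := 2 / (uvec n ⬝ᵥ uvec n) with hc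
  set V := vecMulVec (uvec n) (uvec n) with hV
  have hVV : V * V = (uvec n ⬝ᵥ uvec n) • V := vv_mul_vv _ _ _ _
  have hkey : (c * (c * (uvec n ⬝ᵥ uvec n))) • V = c • V + c • V := by
    rw [← add_smul]
    congr 1
    rw [hc]; field_simp; ring
  rw [householderH, ← hc, ← hV, sub_mul, mul_sub, mul_sub, one_mul, mul_one]
  simp only [smul_mul_assoc, mul_smul_comm, smul_smul, hVV, one_mul]
  rw [hkey]
  abel

/-- The vector `w = 𝟙 - u = (0,…,0,-√(n+1))ᵀ`. -/
noncomputable def wv : Fin (n+1) → ℝ :=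
  fun i => if i = Fin.last n then -Real.sqrt ((n:ℝ)+1) else 0

lemma one_sub_uvec : (fun _ => (1:ℝ)) - uvec n = wv n := by
  funext i
  by_cases h : i = Fin.last n <;> simp [uvec, wv, h]

lemma EEt : (1 : Matrix (Fin (n+1)) (Fin (n+1)) ℝ)
      - ((n:ℝ)+1)⁻¹ • vecMulVec (wv n) (wv n) = Emat n * (Emat n)ᵀ := by
  have hnn : ((n:ℝ)+1) ≠ 0 := by positivity
  have hsq : Real.sqrt ((n:ℝ)+1) * Real.sqrt ((n:ℝ)+1) = (n:ℝ)+1 :=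
    Real.mul_self_sqrt (by positivity)
  have hlast : ∀ k : Fin n, (Fin.last n = Fin.castSucc k) = False :=
    fun k => eq_false (Fin.castSucc_lt_last k).ne'
  ext i j
  simp only [Matrix.mul_apply, Matrix.transpose_apply, Emat, Matrix.of_apply,
    Matrix.sub_apply, Matrix.smul_apply, Matrix.one_apply, vecMulVec_apply, smul_eq_mul]
  induction i using Fin.lastCases with
  | last =>
    simp only [hlast, if_false, zero_mul, Finset.sum_const_zero, wv, if_pos rfl]
    induction j using Fin.lastCases with
    | last => simp only [if_pos rfl]; field_simp; rw [if_pos trivial, if_pos trivial]; nlinarith [hsq]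
    | cast j' =>
      simp [hlast j', wv, (Fin.castSucc_lt_last j').ne]
  | cast i' =>
    have hi : (Fin.castSucc i' = Fin.last n) = False :=
      eq_false (Fin.castSucc_lt_last i').ne
    simp only [wv, hi, if_false, mul_zero, zero_mul, mul_zero, sub_zero,
      Fin.castSucc_inj]
    induction j using Fin.lastCases with
    | last =>
      simp [hlast, (Fin.castSucc_lt_last i').ne]
    | cast j' =>
      simp [Fin.castSucc_inj, Finset.sum_ite_eq, eq_comm]

lemma HJH : householderH n * centerJ n * householderH n = Emat n * (Emat n)ᵀ := by
  have hones : (Matrix.of (fun _ _ => (1:ℝ)) : Matrix (Fin (n+1)) (Fin (n+1)) ℝ)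
      = vecMulVec (fun _ => 1) (fun _ => 1) := by
    ext i j; simp [vecMulVec_apply]
  have hpos : (0:ℝ) < 2*((n:ℝ)+1) + 2*Real.sqrt ((n:ℝ)+1) := by positivity
  have hscalar : 2 / (uvec n ⬝ᵥ uvec n) * (uvec n ⬝ᵥ (fun _ => (1:ℝ))) = 1 := by
    rw [udot, usum]
    field_simp
  have hscalar' : 2 / (uvec n ⬝ᵥ uvec n) * ((fun _ => (1:ℝ)) ⬝ᵥ uvec n) = 1 := by
    rw [dotProduct_comm (fun _ => (1:ℝ)) (uvec n)]; exact hscalar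
  have h1 : householderH n * vecMulVec (fun _ => (1:ℝ)) (fun _ => 1)
      = vecMulVec (wv n) (fun _ => 1) := by
    rw [householderH, sub_mul, one_mul, smul_mul_assoc, vv_mul_vv, smul_smul,
      hscalar, one_smul, ← vv_sub, one_sub_uvec]
  have h2 : vecMulVec (wv n) (fun _ => (1:ℝ)) * householderH n
      = vecMulVec (wv n) (wv n) := by
    rw [householderH, mul_sub, mul_one, mul_smul_comm, vv_mul_vv, smul_smul,
      hscalar', one_smul, ← vv_sub', one_sub_uvec]
  have hJ : centerJ n = 1 - ((n:ℝ)+1)⁻¹ • vecMulVec (fun _ => (1:ℝ)) (fun _ => 1) := by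
    rw [centerJ, hones]
  rw [hJ, mul_sub, mul_one, sub_mul, mul_smul_comm, smul_mul_assoc, H_mul_H n,
    h1, h2]
  exact EEt n

lemma conjT {m k : Type*} (A : Matrix m k ℝ) : Aᴴ = Aᵀ := by
  ext i j; simp [conjTranspose_apply]

lemma J_symm : (centerJ n)ᵀ = centerJ n := by
  ext i j
  simp [centerJ, transpose_apply, Matrix.one_apply, eq_comm]

lemma J_vecMul (x : Fin (n+1) → ℝ) : x ᵥ* centerJ n = centerJ n *ᵥ x := by
  conv_lhs => rw [← J_symm]
  rw [vecMul_transpose]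

lemma J_mulVec_one : centerJ n *ᵥ (fun _ => (1:ℝ)) = 0 := by
  funext i
  have hnn : ((n:ℝ)+1) ≠ 0 := by positivity
  rw [centerJ, sub_mulVec, smul_mulVec, one_mulVec]
  simp [mulVec, dotProduct, Finset.card_univ]
  field_simp
  norm_num

lemma J_mulVec_of (x : Fin (n+1) → ℝ) (hx : (fun _ => (1:ℝ)) ⬝ᵥ x = 0) :
    centerJ n *ᵥ x = x := by
  have hx' : ∑ k, x k = 0 := by simpa [dotProduct] using hx
  funext i
  rw [centerJ, sub_mulVec, smul_mulVec, one_mulVec]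
  simp [mulVec, dotProduct, hx']

lemma hdot (X : Matrix (Fin (n+1)) (Fin (n+1)) ℝ) (x : Fin (n+1) → ℝ) :
    x ⬝ᵥ (centerJ n * X * centerJ n) *ᵥ x
      = (centerJ n *ᵥ x) ⬝ᵥ X *ᵥ (centerJ n *ᵥ x) := by
  rw [Matrix.mul_assoc, ← Matrix.mulVec_mulVec, dotProduct_mulVec, J_vecMul,
    ← Matrix.mulVec_mulVec]

lemma cond1_iff (X : Matrix (Fin (n+1)) (Fin (n+1)) ℝ) (hX : X.IsSymm) :
    (∀ x : Fin (n+1) → ℝ, (fun _ => (1:ℝ)) ⬝ᵥ x = 0 → 0 ≤ x ⬝ᵥ X *ᵥ x)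
      ↔ (centerJ n * X * centerJ n).PosSemidef := by
  have hstar : ∀ x : Fin (n+1) → ℝ, star x = x := fun x => by funext i; simp
  have hXh : X.IsHermitian := by
    show Xᴴ = X
    rw [conjT]; exact hX
  have herm : (centerJ n * X * centerJ n).IsHermitian := by
    have := Matrix.isHermitian_conjTranspose_mul_mul (centerJ n) hXh
    rwa [conjT, J_symm] at this
  constructor
  · intro h
    refine .of_dotProduct_mulVec_nonneg herm fun x => ?_
    have hx0 : (fun _ => (1:ℝ)) ⬝ᵥ (centerJ n *ᵥ x) = 0 := by
      rw [dotProduct_mulVec, J_vecMul, J_mulVec_one, zero_dotProduct]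
    have h2 := h _ hx0
    rw [hstar, hdot]
    exact h2
  · intro hp x hx
    have h2 := hp.dotProduct_mulVec_nonneg x
    rw [hstar, hdot, J_mulVec_of n x hx] at h2
    exact h2

end APSD

/-- `X ∈ K^n_+` and `rank(JXJ) ≤ r` iff the leading block `X̃₁₁` of `HXH`
is positive semidefinite with rank at most `r`. -/
theorem almost_psd_rank_iff (n r : ℕ) (hr : 1 ≤ r) (hrn : r ≤ n + 1)
    (X : Matrix (Fin (n + 1)) (Fin (n + 1)) ℝ) (hX : X.IsSymm) :
    ((∀ x : Fin (n + 1) → ℝ,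
        (fun _ => (1 : ℝ)) ⬝ᵥ x = 0 → 0 ≤ x ⬝ᵥ X.mulVec x) ∧
      (centerJ n * X * centerJ n).rank ≤ r) ↔
    (((householderH n * X * householderH n).submatrix
        (Fin.castSucc : Fin n → Fin (n + 1))
        (Fin.castSucc : Fin n → Fin (n + 1))).PosSemidef ∧
      ((householderH n * X * householderH n).submatrix
        (Fin.castSucc : Fin n → Fin (n + 1))
        (Fin.castSucc : Fin n → Fin (n + 1))).rank ≤ r) := by
  set H := householderH n with hH
  set E := APSD.Emat n with hE
  have hHH : H * H = 1 := APSD.H_mul_H n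
  have hHs : Hᵀ = H := APSD.H_symm n
  have hB : ((H * X * H).submatrix
      (Fin.castSucc : Fin n → Fin (n + 1)) (Fin.castSucc : Fin n → Fin (n + 1)))
      = Eᵀ * (H * X * H) * E := (APSD.EtAE n _).symm
  have hHH' : ∀ {m : Type} (Z : Matrix (Fin (n+1)) m ℝ), H * (H * Z) = Z := by
    intro m Z; rw [← Matrix.mul_assoc, hHH, Matrix.one_mul]
  have hEE' : ∀ {m : Type} (Z : Matrix (Fin n) m ℝ), Eᵀ * (E * Z) = Z := by
    intro m Z; rw [← Matrix.mul_assoc, APSD.EtE n, Matrix.one_mul]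
  have hJ : centerJ n = H * (E * Eᵀ) * H := by
    rw [← APSD.HJH n]
    calc centerJ n = (H*H) * centerJ n * (H*H) := by rw [hHH, one_mul, mul_one]
    _ = H * (H * centerJ n * H) * H := by simp only [Matrix.mul_assoc]
  have hFt : (H * E)ᴴ = Eᵀ * H := by rw [APSD.conjT, transpose_mul, hHs]
  have key1 : centerJ n * X * centerJ n
      = (H * E) * ((H * X * H).submatrix
          (Fin.castSucc : Fin n → Fin (n + 1))
          (Fin.castSucc : Fin n → Fin (n + 1))) * (H * E)ᴴ := by
    rw [hFt, hB, hJ]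
    simp only [Matrix.mul_assoc]
  have key2 : ((H * X * H).submatrix
          (Fin.castSucc : Fin n → Fin (n + 1))
          (Fin.castSucc : Fin n → Fin (n + 1)))
      = (H * E)ᴴ * (centerJ n * X * centerJ n) * (H * E) := by
    rw [hFt, hB, hJ]
    simp only [Matrix.mul_assoc]
    rw [hHH', hEE', hHH', APSD.EtE n, Matrix.mul_one]
  rw [APSD.cond1_iff n X hX]
  constructor
  · rintro ⟨hpsd, hrank⟩
    refine ⟨?_, ?_⟩
    · rw [key2]
      exact hpsd.conjTranspose_mul_mul_same _
    · rw [key2]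
      exact le_trans (le_trans (rank_mul_le_left _ _) (rank_mul_le_right _ _)) hrank
  · rintro ⟨hpsd, hrank⟩
    refine ⟨?_, ?_⟩
    · rw [key1]
      exact hpsd.mul_mul_conjTranspose_same _
    · rw [key1]
      exact le_trans (le_trans (rank_mul_le_left _ _) (rank_mul_le_right _ _)) hrank
end
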